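/- Let $G$ be a group satisfying condition (C) and let $h \in G$ have infinite order. Then for every integer $k \ge 1$ the normalizers of cyclic subgroups are nested, $N_G(\langle h^{k!} \rangle) \subseteq N_G(\langle h^{(k+1)!} \rangle)$, and the commensurator of $\langle h \rangle$ is the union of this chain: $N_G[\langle h \rangle] = \bigcup_{k \ge 1} N_G(\langle h^{k!} \rangle)$. -/

import Mathlib

private lemma conj_zpow_aux {G : Type*} [Group G] (x a : G) (n : ℤ) :
    x * a ^ n * x⁻¹ = (x * a * x⁻¹) ^ n := by
  have := map_zpow (MulAut.conj x) a n
  simp only [MulAut.conj_apply] at this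
  exact this

/-- If `x` conjugates `a` to `a` or `a⁻¹`, then `x` normalizes `⟨a⟩`. -/
private lemma mem_normalizer_of_conj_aux {G : Type*} [Group G] {x a : G} {e : ℤ}
    (he : e = 1 ∨ e = -1) (hx : x * a * x⁻¹ = a ^ e) :
    x ∈ Subgroup.normalizer (Subgroup.zpowers a : Set G) := by
  have key : (x⁻¹ * a * x) ^ e = a := by
    have := conj_zpow_aux x⁻¹ a e
    rw [inv_inv] at this
    rw [← this, ← hx]
    group
  have hx' : x⁻¹ * a * x = a ^ e := by
    have h2 : ((x⁻¹ * a * x) ^ e) ^ e = x⁻¹ * a * x := by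
      rcases he with rfl | rfl <;> simp
    rw [key] at h2
    exact h2.symm
  rw [Subgroup.mem_normalizer_iff]
  intro g
  constructor
  · rintro ⟨n, rfl⟩
    refine ⟨e * n, ?_⟩
    show a ^ (e * n) = x * a ^ n * x⁻¹
    rw [zpow_mul, ← hx, conj_zpow_aux]
  · rintro ⟨n, hn⟩
    have hn' : a ^ n = x * g * x⁻¹ := hn
    refine ⟨e * n, ?_⟩
    show a ^ (e * n) = g
    have hg : g = x⁻¹ * a ^ n * x := by rw [hn']; group
    rw [zpow_mul, ← hx', hg]
    have h5 := conj_zpow_aux x⁻¹ a n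
    rw [inv_inv] at h5
    exact h5.symm

/-- From condition (C): an element normalizing `⟨h ^ N⟩` (with `h` of infinite order and
`0 < N`) conjugates `h ^ N` to itself or its inverse. -/
private lemma conj_of_mem_normalizer_aux {G : Type*} [Group G]
    (hC : ∀ g h : G, ¬ IsOfFinOrder h → ∀ k l : ℤ, g * h ^ k * g⁻¹ = h ^ l → |k| = |l|)
    {h : G} (hh : ¬ IsOfFinOrder h) {x : G} {N : ℕ} (hN : 0 < N)
    (hx : x ∈ Subgroup.normalizer (Subgroup.zpowers (h ^ N) : Set G)) :
    ∃ e : ℤ, (e = 1 ∨ e = -1) ∧ x * h ^ N * x⁻¹ = (h ^ N) ^ e := by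
  have hmem : x * h ^ N * x⁻¹ ∈ Subgroup.zpowers (h ^ N) :=
    (Subgroup.mem_normalizer_iff.mp hx (h ^ N)).mp (Subgroup.mem_zpowers _)
  obtain ⟨m, hm⟩ := hmem
  have hm' : (h ^ N) ^ m = x * h ^ N * x⁻¹ := hm
  have hconj : x * h ^ (N : ℤ) * x⁻¹ = h ^ ((N : ℤ) * m) := by
    rw [zpow_natCast, zpow_mul, zpow_natCast, hm']
  have habs := hC x h hh (N : ℤ) ((N : ℤ) * m) hconj
  have hNne : |(N : ℤ)| ≠ 0 := by
    simp only [Int.abs_natCast]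
    exact_mod_cast hN.ne'
  have h1 : |(N : ℤ)| * |m| = |(N : ℤ)| * 1 := by
    rw [mul_one, ← abs_mul]; exact habs.symm
  have h2 : |m| = 1 := mul_left_cancel₀ hNne h1
  have he : m = 1 ∨ m = -1 := by
    simp only [Int.abs_eq_natAbs] at h2
    omega
  exact ⟨m, he, hm'.symm⟩

/-- If `x` conjugates `h ^ n` to `h ^ l` with `|n| = |l|`, `n ≠ 0`, and `(n : ℤ) ∣ N`,
then `x` normalizes `⟨h ^ N⟩`. -/
private lemma mem_normalizer_of_dvd_aux {G : Type*} [Group G] {h x : G} {n l : ℤ} {N : ℕ}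
    (habs : |n| = |l|) (hconj : x * h ^ n * x⁻¹ = h ^ l) (hdvd : n ∣ (N : ℤ)) :
    x ∈ Subgroup.normalizer (Subgroup.zpowers (h ^ N) : Set G) := by
  obtain ⟨c, hc⟩ := hdvd
  have hnl : l = n ∨ l = -n := by
    simp only [Int.abs_eq_natAbs] at habs
    omega
  have hbase : x * h ^ (N : ℤ) * x⁻¹ = (h ^ (N : ℤ)) ^ (if l = n then (1 : ℤ) else -1) := by
    rw [hc, zpow_mul, conj_zpow_aux x (h ^ n) c, hconj]
    rcases hnl with rfl | rfl
    · simp [← zpow_mul]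
    · by_cases hn0 : n = 0
      · simp [hn0]
      · rw [if_neg (by omega), ← zpow_mul, ← zpow_mul, ← zpow_mul]
        congr 1
        ring
  have hfin : x * h ^ N * x⁻¹ = (h ^ N) ^ (if l = n then (1 : ℤ) else -1) := by
    rw [← zpow_natCast h N]
    exact hbase
  exact mem_normalizer_of_conj_aux (by split <;> simp) hfin

/-- Let `G` satisfy condition (C) and let `h ∈ G` have infinite order. Then the
normalizers of the cyclic subgroups `⟨h ^ k!⟩` are nested, and the commensurator of
`⟨h⟩` is their union over `k ≥ 1`. -/
theorem commensurator_eq_iUnion_normalizer {G : Type*} [Group G]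
    (hC : ∀ g h : G, ¬ IsOfFinOrder h → ∀ k l : ℤ, g * h ^ k * g⁻¹ = h ^ l → |k| = |l|)
    (h : G) (hh : ¬ IsOfFinOrder h) :
    (∀ k : ℕ, 1 ≤ k →
      Subgroup.normalizer (Subgroup.zpowers (h ^ Nat.factorial k) : Set G) ≤
        Subgroup.normalizer (Subgroup.zpowers (h ^ Nat.factorial (k + 1)) : Set G)) ∧
    {x : G | (((fun y => x * y * x⁻¹) '' (Subgroup.zpowers h : Set G)) ∩
        (Subgroup.zpowers h : Set G)).Infinite}
      = ⋃ k ≥ 1, (Subgroup.normalizer (Subgroup.zpowers (h ^ Nat.factorial k) : Set G) : Set G) := by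
  have hinj : Function.Injective fun n : ℤ => h ^ n :=
    injective_zpow_iff_not_isOfFinOrder.mpr hh
  constructor
  · -- nested normalizers
    intro k hk x hx
    obtain ⟨e, he, hxe⟩ := conj_of_mem_normalizer_aux hC hh (Nat.factorial_pos k) hx
    have hconj : x * h ^ ((k.factorial : ℤ)) * x⁻¹ = h ^ ((k.factorial : ℤ) * e) := by
      rw [zpow_natCast, hxe, ← zpow_natCast h k.factorial, ← zpow_mul]
    refine mem_normalizer_of_dvd_aux (l := (k.factorial : ℤ) * e) ?_ hconj ?_
    · rw [abs_mul]
      rcases he with rfl | rfl <;> simp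
    · exact_mod_cast Int.natCast_dvd_natCast.mpr (Nat.factorial_dvd_factorial (Nat.le_succ k))
  · ext x
    simp only [Set.mem_setOf_eq, Set.mem_iUnion, SetLike.mem_coe, exists_prop]
    constructor
    · -- infinite intersection ⟹ in some normalizer
      intro hinf
      obtain ⟨g, hg⟩ := (hinf.diff (Set.finite_singleton 1)).nonempty
      obtain ⟨⟨⟨y, hy, hyg⟩, hg2⟩, hg1⟩ := hg
      obtain ⟨m, hm⟩ := hy
      obtain ⟨l, hl⟩ := hg2
      have hm' : h ^ m = y := hm
      have hl' : h ^ l = g := hl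
      have hyg' : x * y * x⁻¹ = g := hyg
      have hconj : x * h ^ m * x⁻¹ = h ^ l := by rw [hm', hyg', hl']
      have habs := hC x h hh m l hconj
      have hl0 : l ≠ 0 := by
        rintro rfl
        exact hg1 (by rw [Set.mem_singleton_iff, ← hl', zpow_zero])
      have hm0 : m ≠ 0 := by
        simp only [Int.abs_eq_natAbs] at habs
        omega
      refine ⟨m.natAbs, by omega, ?_⟩
      refine mem_normalizer_of_dvd_aux habs hconj ?_
      have hdvd : (m.natAbs : ℤ) ∣ (m.natAbs.factorial : ℤ) :=
        Int.natCast_dvd_natCast.mpr (Nat.dvd_factorial (by omega) le_rfl)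
      exact Int.natAbs_dvd.mp hdvd
    · -- in some normalizer ⟹ infinite intersection
      rintro ⟨k, hk1, hx⟩
      obtain ⟨e, he, hxe⟩ := conj_of_mem_normalizer_aux hC hh (Nat.factorial_pos k) hx
      have hxe' : x * h ^ ((k.factorial : ℤ)) * x⁻¹ = h ^ ((k.factorial : ℤ) * e) := by
        rw [zpow_natCast, hxe, ← zpow_natCast h k.factorial, ← zpow_mul]
      refine Set.infinite_of_injective_forall_mem
        (f := fun c : ℤ => x * h ^ ((k.factorial : ℤ) * c) * x⁻¹) ?_ ?_
      · intro a b hab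
        have hab' : x * h ^ ((k.factorial : ℤ) * a) * x⁻¹ =
            x * h ^ ((k.factorial : ℤ) * b) * x⁻¹ := hab
        have h3 : h ^ ((k.factorial : ℤ) * a) = h ^ ((k.factorial : ℤ) * b) :=
          mul_left_cancel (mul_right_cancel hab')
        have h4 : (k.factorial : ℤ) * a = (k.factorial : ℤ) * b := hinj h3
        have hfac : (k.factorial : ℤ) ≠ 0 := by
          exact_mod_cast Nat.factorial_ne_zero k
        exact mul_left_cancel₀ hfac h4
      · intro c
        constructor
        · exact ⟨h ^ ((k.factorial : ℤ) * c), ⟨_, rfl⟩, rfl⟩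
        · refine ⟨(k.factorial : ℤ) * e * c, ?_⟩
          show h ^ ((k.factorial : ℤ) * e * c) = x * h ^ ((k.factorial : ℤ) * c) * x⁻¹
          rw [zpow_mul h (k.factorial : ℤ) c, conj_zpow_aux x (h ^ (k.factorial : ℤ)) c,
            hxe', ← zpow_mul]
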